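/- Let b ∈ [0,1], let x_e ∈ [0, b], and let P₀ ~ Pois(x_e), P₁ ~ Pois(b - x_e), P₂ ~ Pois(b - x_e) be mutually independent Poisson random variables. Then E[ P₀ / (P₀ + max(P₁, P₂)) ] ≥ x_e · E[ 1 / (1 + max(Q₁, Q₂)) ], where Q₁, Q₂ are independent Pois(b) random variables and the ratio is interpreted as 0 when P₀ = 0. -/

import Mathlib

/-- The probability that a Poisson random variable with parameter `r ≥ 0` equals `n`. -/
noncomputable def poissonProb (r : ℝ) (n : ℕ) : ℝ := Real.exp (-r) * r ^ n / (Nat.factorial n)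

open ENNReal Finset

lemma poissonProb_nonneg {r : ℝ} (hr : 0 ≤ r) (n : ℕ) : 0 ≤ poissonProb r n := by
  unfold poissonProb; positivity

lemma summable_poissonProb (r : ℝ) : Summable (poissonProb r) := by
  unfold poissonProb
  simp_rw [mul_div_assoc]
  exact (Real.summable_pow_div_factorial r).mul_left _

lemma tsum_poissonProb (r : ℝ) : ∑' n, poissonProb r n = 1 := by
  unfold poissonProb
  simp_rw [mul_div_assoc]
  rw [tsum_mul_left]
  have h : ∑' n : ℕ, r ^ n / (Nat.factorial n : ℝ) = Real.exp r := by
    rw [Real.exp_eq_exp_ℝ]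
    exact (NormedSpace.expSeries_div_hasSum_exp r).tsum_eq
  rw [h, ← Real.exp_add]; simp

lemma tsum_ofReal_poissonProb {r : ℝ} (hr : 0 ≤ r) :
    ∑' n, ENNReal.ofReal (poissonProb r n) = 1 := by
  rw [← ENNReal.ofReal_tsum_of_nonneg (fun n => poissonProb_nonneg hr n) (summable_poissonProb r),
    tsum_poissonProb, ENNReal.ofReal_one]

lemma poissonProb_conv (a c : ℝ) (j : ℕ) :
    poissonProb (a + c) j = ∑ y ∈ Finset.range (j + 1), poissonProb a y * poissonProb c (j - y) := by
  unfold poissonProb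
  rw [neg_add, Real.exp_add, add_pow, Finset.mul_sum, Finset.sum_div]
  apply Finset.sum_congr rfl
  intro y hy
  have hyj : y ≤ j := Nat.lt_succ_iff.mp (Finset.mem_range.mp hy)
  have hfact : ((j.choose y : ℕ) : ℝ) * (Nat.factorial y) * (Nat.factorial (j - y)) =
      (Nat.factorial j : ℝ) := by
    exact_mod_cast congrArg (Nat.cast : ℕ → ℝ) (Nat.choose_mul_factorial_mul_factorial hyj)
  have h1 : (Nat.factorial y : ℝ) ≠ 0 := Nat.cast_ne_zero.mpr (Nat.factorial_ne_zero y)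
  have h2 : (Nat.factorial (j - y) : ℝ) ≠ 0 := Nat.cast_ne_zero.mpr (Nat.factorial_ne_zero _)
  have h3 : (Nat.factorial j : ℝ) ≠ 0 := Nat.cast_ne_zero.mpr (Nat.factorial_ne_zero j)
  field_simp
  rw [← hfact]
  ring

lemma step1_real (xe : ℝ) (n m : ℕ) :
    (((n : ℝ) + 1) / (((n : ℝ) + 1) + m)) * poissonProb xe (n + 1) =
      xe * (poissonProb xe n / (1 + (n : ℝ) + (m : ℝ))) := by
  unfold poissonProb
  have hf : (Nat.factorial (n + 1) : ℝ) = ((n : ℝ) + 1) * (Nat.factorial n) := by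
    rw [Nat.factorial_succ]; push_cast; ring
  have h1 : (Nat.factorial n : ℝ) ≠ 0 := Nat.cast_ne_zero.mpr (Nat.factorial_ne_zero n)
  have h2 : ((n : ℝ) + 1) + m ≠ 0 := by positivity
  have h3 : (1 : ℝ) + n + m ≠ 0 := by positivity
  have h4 : ((n : ℝ) + 1) ≠ 0 := by positivity
  rw [hf, pow_succ]
  field_simp
  ring

lemma tsum_range_eq (F : ℕ → ℕ → ℝ≥0∞) :
    ∑' j : ℕ, ∑ y ∈ Finset.range (j + 1), F y (j - y) = ∑' y : ℕ, ∑' p : ℕ, F y p := by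
  rw [← ENNReal.tsum_prod]
  rw [← Finset.HasAntidiagonal.sigmaAntidiagonalEquivProd.tsum_eq (fun x : ℕ × ℕ => F x.1 x.2)]
  rw [ENNReal.tsum_sigma']
  apply tsum_congr
  intro j
  simp only [Finset.HasAntidiagonal.sigmaAntidiagonalEquivProd_apply]
  exact ((Finset.tsum_subtype (Finset.HasAntidiagonal.antidiagonal j) (fun x : ℕ × ℕ => F x.1 x.2)).trans
    (Finset.Nat.sum_antidiagonal_eq_sum_range_succ_mk _ j)).symm

lemma step1_enn {xe : ℝ} (hx : 0 ≤ xe) (m : ℕ) :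
    ∑' n : ℕ, ENNReal.ofReal (((n : ℝ) / ((n : ℝ) + (m : ℝ))) * poissonProb xe n) =
      ENNReal.ofReal xe *
        ∑' x : ℕ, ENNReal.ofReal (poissonProb xe x / (1 + (x : ℝ) + (m : ℝ))) := by
  rw [tsum_eq_zero_add' ENNReal.summable]
  simp only [Nat.cast_zero, zero_div, zero_mul, ENNReal.ofReal_zero, zero_add]
  rw [← ENNReal.tsum_mul_left]
  apply tsum_congr
  intro n
  rw [← ENNReal.ofReal_mul hx]
  congr 1
  push_cast
  exact step1_real xe n m

lemma tsum_le_of_le_pois {r : ℝ} (hr : 0 ≤ r) (c : ℝ≥0∞) (G : ℕ → ℝ≥0∞)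
    (h : ∀ k, G k ≤ c * ENNReal.ofReal (poissonProb r k)) : ∑' k, G k ≤ c := by
  calc ∑' k, G k ≤ ∑' k, c * ENNReal.ofReal (poissonProb r k) := ENNReal.tsum_le_tsum h
    _ = c := by rw [ENNReal.tsum_mul_left, tsum_ofReal_poissonProb hr, mul_one]

lemma L_form {b xe : ℝ} (hx0 : 0 ≤ xe) (hbx : 0 ≤ b - xe) :
    (∑' n : ℕ, ∑' j : ℕ, ∑' k : ℕ,
        ENNReal.ofReal (((n : ℝ) / ((n : ℝ) + ((max j k : ℕ) : ℝ))) *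
          (poissonProb xe n * poissonProb (b - xe) j * poissonProb (b - xe) k))) =
    ∑' j : ℕ, ∑' k : ℕ,
      (ENNReal.ofReal (poissonProb (b - xe) j) * ENNReal.ofReal (poissonProb (b - xe) k)) *
        (ENNReal.ofReal xe *
          ∑' x : ℕ, ENNReal.ofReal (poissonProb xe x / (1 + (x : ℝ) + ((max j k : ℕ) : ℝ)))) := by
  have h1 : ∀ n j k : ℕ, ENNReal.ofReal (((n : ℝ) / ((n : ℝ) + ((max j k : ℕ) : ℝ))) *
      (poissonProb xe n * poissonProb (b - xe) j * poissonProb (b - xe) k)) =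
      (ENNReal.ofReal (poissonProb (b - xe) j) * ENNReal.ofReal (poissonProb (b - xe) k)) *
        ENNReal.ofReal (((n : ℝ) / ((n : ℝ) + ((max j k : ℕ) : ℝ))) * poissonProb xe n) := by
    intro n j k
    rw [← ENNReal.ofReal_mul (poissonProb_nonneg hbx j),
      ← ENNReal.ofReal_mul (mul_nonneg (poissonProb_nonneg hbx j) (poissonProb_nonneg hbx k))]
    congr 1; ring
  simp only [h1]
  rw [ENNReal.tsum_comm]
  apply tsum_congr; intro j
  rw [ENNReal.tsum_comm]
  apply tsum_congr; intro k
  rw [ENNReal.tsum_mul_left, step1_enn hx0 (max j k)]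

lemma key_half {xe : ℝ} (hx0 : 0 ≤ xe) (p q : ℕ) :
    (∑' y : ℕ, ENNReal.ofReal (poissonProb xe y) *
      ∑' z : ℕ, ENNReal.ofReal (poissonProb xe z) *
        ENNReal.ofReal (1 / (1 + ((max (y + p) (z + q) : ℕ) : ℝ)))) ≤
    ∑' x : ℕ, ENNReal.ofReal (poissonProb xe x) *
      ENNReal.ofReal (1 / (1 + (x : ℝ) + (p : ℝ))) := by
  apply ENNReal.tsum_le_tsum
  intro y
  apply mul_le_mul_right
  calc ∑' z : ℕ, ENNReal.ofReal (poissonProb xe z) *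
        ENNReal.ofReal (1 / (1 + ((max (y + p) (z + q) : ℕ) : ℝ)))
      ≤ ∑' z : ℕ, ENNReal.ofReal (poissonProb xe z) *
        ENNReal.ofReal (1 / (1 + (y : ℝ) + (p : ℝ))) := by
        apply ENNReal.tsum_le_tsum
        intro z
        apply mul_le_mul_right
        apply ENNReal.ofReal_le_ofReal
        apply one_div_le_one_div_of_le
        · positivity
        · have : ((y + p : ℕ) : ℝ) ≤ ((max (y + p) (z + q) : ℕ) : ℝ) :=
            Nat.cast_le.mpr (le_max_left _ _)
          push_cast at this ⊢
          linarith
    _ = ENNReal.ofReal (1 / (1 + (y : ℝ) + (p : ℝ))) := by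
        rw [ENNReal.tsum_mul_right, tsum_ofReal_poissonProb hx0, one_mul]

lemma key_full {xe : ℝ} (hx0 : 0 ≤ xe) (p q : ℕ) :
    (∑' y : ℕ, ENNReal.ofReal (poissonProb xe y) *
      ∑' z : ℕ, ENNReal.ofReal (poissonProb xe z) *
        ENNReal.ofReal (1 / (1 + ((max (y + p) (z + q) : ℕ) : ℝ)))) ≤
    ∑' x : ℕ, ENNReal.ofReal (poissonProb xe x) *
      ENNReal.ofReal (1 / (1 + (x : ℝ) + ((max p q : ℕ) : ℝ))) := by
  rcases le_total q p with hqp | hpq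
  · rw [max_eq_left hqp]
    exact key_half hx0 p q
  · rw [max_eq_right hpq]
    have hswap : (∑' y : ℕ, ENNReal.ofReal (poissonProb xe y) *
        ∑' z : ℕ, ENNReal.ofReal (poissonProb xe z) *
          ENNReal.ofReal (1 / (1 + ((max (y + p) (z + q) : ℕ) : ℝ)))) =
        ∑' z : ℕ, ENNReal.ofReal (poissonProb xe z) *
        ∑' y : ℕ, ENNReal.ofReal (poissonProb xe y) *
          ENNReal.ofReal (1 / (1 + ((max (z + q) (y + p) : ℕ) : ℝ))) := by
      simp only [← ENNReal.tsum_mul_left]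
      rw [ENNReal.tsum_comm]
      apply tsum_congr; intro z
      apply tsum_congr; intro y
      rw [max_comm]
      ring
    rw [hswap]
    exact key_half hx0 q p

lemma R_quad {b xe : ℝ} (hx0 : 0 ≤ xe) (hbx : 0 ≤ b - xe) :
    (∑' j : ℕ, ∑' k : ℕ, ENNReal.ofReal
        ((1 / (1 + ((max j k : ℕ) : ℝ))) * (poissonProb b j * poissonProb b k))) =
    ∑' p : ℕ, ∑' q : ℕ,
      (ENNReal.ofReal (poissonProb (b - xe) p) * ENNReal.ofReal (poissonProb (b - xe) q)) *
        (∑' y : ℕ, ENNReal.ofReal (poissonProb xe y) *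
          ∑' z : ℕ, ENNReal.ofReal (poissonProb xe z) *
            ENNReal.ofReal (1 / (1 + ((max (y + p) (z + q) : ℕ) : ℝ)))) := by
  have pnb := fun n => poissonProb_nonneg hbx n
  have pnx := fun n => poissonProb_nonneg hx0 n
  have hvnn : ∀ m : ℕ, (0:ℝ) ≤ 1 / (1 + (m : ℝ)) := fun m => by positivity
  have hconv : ∀ j : ℕ, poissonProb b j =
      ∑ y ∈ Finset.range (j + 1), poissonProb xe y * poissonProb (b - xe) (j - y) := by
    intro j
    have h := poissonProb_conv xe (b - xe) j
    rwa [show xe + (b - xe) = b by ring] at h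
  have hA : ∀ j k : ℕ, ENNReal.ofReal
      ((1 / (1 + ((max j k : ℕ) : ℝ))) * (poissonProb b j * poissonProb b k)) =
      ∑ y ∈ Finset.range (j + 1), ∑ z ∈ Finset.range (k + 1),
        ENNReal.ofReal (((poissonProb (b - xe) (j - y) * poissonProb (b - xe) (k - z)) *
          poissonProb xe y) * (poissonProb xe z * (1 / (1 + ((max j k : ℕ) : ℝ))))) := by
    intro j k
    have hr : (1 / (1 + ((max j k : ℕ) : ℝ))) * (poissonProb b j * poissonProb b k) =
        ∑ y ∈ Finset.range (j + 1), ∑ z ∈ Finset.range (k + 1),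
          (((poissonProb (b - xe) (j - y) * poissonProb (b - xe) (k - z)) *
            poissonProb xe y) * (poissonProb xe z * (1 / (1 + ((max j k : ℕ) : ℝ))))) := by
      rw [hconv j, hconv k, Finset.sum_mul_sum, Finset.mul_sum]
      refine Finset.sum_congr rfl fun y _ => ?_
      rw [Finset.mul_sum]
      refine Finset.sum_congr rfl fun z _ => ?_
      ring
    rw [hr, ENNReal.ofReal_sum_of_nonneg]
    · refine Finset.sum_congr rfl fun y _ => ?_
      refine ENNReal.ofReal_sum_of_nonneg fun z _ => ?_
      exact mul_nonneg (mul_nonneg (mul_nonneg (pnb _) (pnb _)) (pnx _))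
        (mul_nonneg (pnx _) (hvnn _))
    · intro y _
      refine Finset.sum_nonneg fun z _ => ?_
      exact mul_nonneg (mul_nonneg (mul_nonneg (pnb _) (pnb _)) (pnx _))
        (mul_nonneg (pnx _) (hvnn _))
  simp only [hA]
  have hB1 : ∀ j : ℕ, (∑' k : ℕ, ∑ y ∈ Finset.range (j + 1), ∑ z ∈ Finset.range (k + 1),
      ENNReal.ofReal (((poissonProb (b - xe) (j - y) * poissonProb (b - xe) (k - z)) *
        poissonProb xe y) * (poissonProb xe z * (1 / (1 + ((max j k : ℕ) : ℝ)))))) =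
      ∑ y ∈ Finset.range (j + 1),
        (fun y p => ∑' k : ℕ, ∑ z ∈ Finset.range (k + 1),
          ENNReal.ofReal (((poissonProb (b - xe) p * poissonProb (b - xe) (k - z)) *
            poissonProb xe y) * (poissonProb xe z * (1 / (1 + ((max (y + p) k : ℕ) : ℝ))))))
          y (j - y) := by
    intro j
    rw [Summable.tsum_finsetSum fun i _ => ENNReal.summable]
    refine Finset.sum_congr rfl fun y hy => ?_
    have hyj : y ≤ j := Nat.lt_succ_iff.mp (Finset.mem_range.mp hy)
    simp only [Nat.add_sub_cancel' hyj]
  simp only [hB1]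
  rw [tsum_range_eq (fun y p => ∑' k : ℕ, ∑ z ∈ Finset.range (k + 1),
    ENNReal.ofReal (((poissonProb (b - xe) p * poissonProb (b - xe) (k - z)) *
      poissonProb xe y) * (poissonProb xe z * (1 / (1 + ((max (y + p) k : ℕ) : ℝ))))))]
  have hB2 : ∀ y p : ℕ, (∑' k : ℕ, ∑ z ∈ Finset.range (k + 1),
      ENNReal.ofReal (((poissonProb (b - xe) p * poissonProb (b - xe) (k - z)) *
        poissonProb xe y) * (poissonProb xe z * (1 / (1 + ((max (y + p) k : ℕ) : ℝ)))))) =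
      ∑' z : ℕ, ∑' q : ℕ,
        ENNReal.ofReal (((poissonProb (b - xe) p * poissonProb (b - xe) q) *
          poissonProb xe y) * (poissonProb xe z * (1 / (1 + ((max (y + p) (z + q) : ℕ) : ℝ))))) := by
    intro y p
    rw [← tsum_range_eq (fun z q => ENNReal.ofReal (((poissonProb (b - xe) p * poissonProb (b - xe) q) *
      poissonProb xe y) * (poissonProb xe z * (1 / (1 + ((max (y + p) (z + q) : ℕ) : ℝ))))))]
    apply tsum_congr; intro k
    refine Finset.sum_congr rfl fun z hz => ?_
    have hzk : z ≤ k := Nat.lt_succ_iff.mp (Finset.mem_range.mp hz)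
    simp only [Nat.add_sub_cancel' hzk]
  simp only [hB2]
  have hC : ∀ y p z q : ℕ,
      ENNReal.ofReal (((poissonProb (b - xe) p * poissonProb (b - xe) q) *
        poissonProb xe y) * (poissonProb xe z * (1 / (1 + ((max (y + p) (z + q) : ℕ) : ℝ))))) =
      ((ENNReal.ofReal (poissonProb (b - xe) p) * ENNReal.ofReal (poissonProb (b - xe) q)) *
        ENNReal.ofReal (poissonProb xe y)) * (ENNReal.ofReal (poissonProb xe z) *
          ENNReal.ofReal (1 / (1 + ((max (y + p) (z + q) : ℕ) : ℝ)))) := by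
    intro y p z q
    rw [← ENNReal.ofReal_mul (pnb p), ← ENNReal.ofReal_mul (mul_nonneg (pnb p) (pnb q)),
      ← ENNReal.ofReal_mul (pnx z),
      ← ENNReal.ofReal_mul (mul_nonneg (mul_nonneg (pnb p) (pnb q)) (pnx y))]
  simp only [hC]
  rw [ENNReal.tsum_comm]
  apply tsum_congr; intro p
  have hD1 : ∀ y : ℕ, (∑' z : ℕ, ∑' q : ℕ,
      ((ENNReal.ofReal (poissonProb (b - xe) p) * ENNReal.ofReal (poissonProb (b - xe) q)) *
        ENNReal.ofReal (poissonProb xe y)) * (ENNReal.ofReal (poissonProb xe z) *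
          ENNReal.ofReal (1 / (1 + ((max (y + p) (z + q) : ℕ) : ℝ))))) =
      ∑' q : ℕ, ∑' z : ℕ,
      ((ENNReal.ofReal (poissonProb (b - xe) p) * ENNReal.ofReal (poissonProb (b - xe) q)) *
        ENNReal.ofReal (poissonProb xe y)) * (ENNReal.ofReal (poissonProb xe z) *
          ENNReal.ofReal (1 / (1 + ((max (y + p) (z + q) : ℕ) : ℝ)))) := by
    intro y; exact ENNReal.tsum_comm
  simp only [hD1]
  rw [ENNReal.tsum_comm]
  apply tsum_congr; intro q
  calc (∑' y : ℕ, ∑' z : ℕ,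
      ((ENNReal.ofReal (poissonProb (b - xe) p) * ENNReal.ofReal (poissonProb (b - xe) q)) *
        ENNReal.ofReal (poissonProb xe y)) * (ENNReal.ofReal (poissonProb xe z) *
          ENNReal.ofReal (1 / (1 + ((max (y + p) (z + q) : ℕ) : ℝ)))))
      = ∑' y : ℕ, (ENNReal.ofReal (poissonProb (b - xe) p) *
          ENNReal.ofReal (poissonProb (b - xe) q)) * (ENNReal.ofReal (poissonProb xe y) *
            ∑' z : ℕ, ENNReal.ofReal (poissonProb xe z) *
              ENNReal.ofReal (1 / (1 + ((max (y + p) (z + q) : ℕ) : ℝ)))) := by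
        apply tsum_congr; intro y
        rw [ENNReal.tsum_mul_left, mul_assoc]
    _ = (ENNReal.ofReal (poissonProb (b - xe) p) * ENNReal.ofReal (poissonProb (b - xe) q)) *
        (∑' y : ℕ, ENNReal.ofReal (poissonProb xe y) *
          ∑' z : ℕ, ENNReal.ofReal (poissonProb xe z) *
            ENNReal.ofReal (1 / (1 + ((max (y + p) (z + q) : ℕ) : ℝ)))) := by
        rw [ENNReal.tsum_mul_left]

/-- For `b ∈ [0,1]`, `x_e ∈ [0,b]` and mutually independent `P₀ ~ Pois(x_e)`,
`P₁, P₂ ~ Pois(b-x_e)`, we have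
`E[P₀/(P₀+max(P₁,P₂))] ≥ x_e · E[1/(1+max(Q₁,Q₂))]` where `Q₁, Q₂` are independent
`Pois(b)` random variables (the ratio being `0` when `P₀ = 0`). -/
theorem bipartite_balancedness_estimate
    (b xe : ℝ) (hb0 : 0 ≤ b) (hb1 : b ≤ 1) (hx0 : 0 ≤ xe) (hxb : xe ≤ b) :
    (∑' n : ℕ, ∑' j : ℕ, ∑' k : ℕ,
        ((n : ℝ) / ((n : ℝ) + (max j k : ℝ))) *
          (poissonProb xe n * poissonProb (b - xe) j * poissonProb (b - xe) k)) ≥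
      xe * ∑' j : ℕ, ∑' k : ℕ,
        (1 / (1 + (max j k : ℝ))) * (poissonProb b j * poissonProb b k) := by
  have hbx : (0:ℝ) ≤ b - xe := sub_nonneg.mpr hxb
  have pnx := fun n => poissonProb_nonneg hx0 n
  have pnb := fun n => poissonProb_nonneg hbx n
  have pnB := fun n => poissonProb_nonneg hb0 n
  simp only [← Nat.cast_max]
  -- weight bounds
  have hwL : ∀ n m : ℕ, (0:ℝ) ≤ (n:ℝ)/((n:ℝ)+(m:ℝ)) ∧ (n:ℝ)/((n:ℝ)+(m:ℝ)) ≤ 1 := by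
    intro n m
    constructor
    · positivity
    · apply div_le_one_of_le₀
      · have : (0:ℝ) ≤ (m:ℝ) := Nat.cast_nonneg m
        linarith
      · positivity
  have hwR : ∀ m : ℕ, (0:ℝ) ≤ 1/(1+(m:ℝ)) ∧ 1/(1+(m:ℝ)) ≤ 1 := by
    intro m
    constructor
    · positivity
    · rw [div_le_one (by positivity)]
      have : (0:ℝ) ≤ (m:ℝ) := Nat.cast_nonneg m
      linarith
  -- real terms nonneg
  have hgLnn : ∀ n j k : ℕ, (0:ℝ) ≤ ((n : ℝ) / ((n : ℝ) + ((max j k : ℕ) : ℝ))) *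
      (poissonProb xe n * poissonProb (b - xe) j * poissonProb (b - xe) k) := fun n j k =>
    mul_nonneg (hwL n _).1 (mul_nonneg (mul_nonneg (pnx n) (pnb j)) (pnb k))
  have hgRnn : ∀ j k : ℕ, (0:ℝ) ≤ (1 / (1 + ((max j k : ℕ) : ℝ))) *
      (poissonProb b j * poissonProb b k) := fun j k =>
    mul_nonneg (hwR _).1 (mul_nonneg (pnB j) (pnB k))
  -- ENNReal term functions
  set Lf : ℕ → ℕ → ℕ → ℝ≥0∞ := fun n j k =>
    ENNReal.ofReal (((n : ℝ) / ((n : ℝ) + ((max j k : ℕ) : ℝ))) *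
      (poissonProb xe n * poissonProb (b - xe) j * poissonProb (b - xe) k)) with hLf
  set Rf : ℕ → ℕ → ℝ≥0∞ := fun j k =>
    ENNReal.ofReal ((1 / (1 + ((max j k : ℕ) : ℝ))) * (poissonProb b j * poissonProb b k)) with hRf
  -- finiteness bounds
  have hL2 : ∀ n j, (∑' k, Lf n j k) ≤
      ENNReal.ofReal (poissonProb xe n) * ENNReal.ofReal (poissonProb (b - xe) j) := by
    intro n j
    apply tsum_le_of_le_pois hbx
    intro k
    rw [hLf]
    rw [← ENNReal.ofReal_mul (pnx n),
      ← ENNReal.ofReal_mul (mul_nonneg (pnx n) (pnb j))]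
    exact ENNReal.ofReal_le_ofReal
      (mul_le_of_le_one_left (mul_nonneg (mul_nonneg (pnx n) (pnb j)) (pnb k)) (hwL n _).2)
  have hL1 : ∀ n, (∑' j, ∑' k, Lf n j k) ≤ ENNReal.ofReal (poissonProb xe n) := by
    intro n
    apply tsum_le_of_le_pois hbx
    intro j
    exact hL2 n j
  have hL2ne : ∀ n j, (∑' k, Lf n j k) ≠ ∞ := fun n j =>
    ne_top_of_le_ne_top (ENNReal.mul_ne_top ENNReal.ofReal_ne_top ENNReal.ofReal_ne_top) (hL2 n j)
  have hL1ne : ∀ n, (∑' j, ∑' k, Lf n j k) ≠ ∞ := fun n =>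
    ne_top_of_le_ne_top ENNReal.ofReal_ne_top (hL1 n)
  have hLtop : (∑' n, ∑' j, ∑' k, Lf n j k) ≠ ∞ := by
    refine ne_top_of_le_ne_top ENNReal.one_ne_top (tsum_le_of_le_pois hx0 1 _ fun n => ?_)
    rw [one_mul]
    exact hL1 n
  have hR1 : ∀ j, (∑' k, Rf j k) ≤ ENNReal.ofReal (poissonProb b j) := by
    intro j
    apply tsum_le_of_le_pois hb0
    intro k
    rw [hRf, ← ENNReal.ofReal_mul (pnB j)]
    exact ENNReal.ofReal_le_ofReal
      (mul_le_of_le_one_left (mul_nonneg (pnB j) (pnB k)) (hwR _).2)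
  have hR1ne : ∀ j, (∑' k, Rf j k) ≠ ∞ := fun j =>
    ne_top_of_le_ne_top ENNReal.ofReal_ne_top (hR1 j)
  -- conversion of the left side
  have hLconv : (∑' n : ℕ, ∑' j : ℕ, ∑' k : ℕ,
      ((n : ℝ) / ((n : ℝ) + ((max j k : ℕ) : ℝ))) *
        (poissonProb xe n * poissonProb (b - xe) j * poissonProb (b - xe) k)) =
      (∑' n, ∑' j, ∑' k, Lf n j k).toReal := by
    rw [ENNReal.tsum_toReal_eq hL1ne]
    apply tsum_congr; intro n
    rw [ENNReal.tsum_toReal_eq (hL2ne n)]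
    apply tsum_congr; intro j
    rw [ENNReal.tsum_toReal_eq (fun k => ENNReal.ofReal_ne_top)]
    exact tsum_congr fun k => (ENNReal.toReal_ofReal (hgLnn n j k)).symm
  -- conversion of the right side
  have hRconv : (∑' j : ℕ, ∑' k : ℕ,
      (1 / (1 + ((max j k : ℕ) : ℝ))) * (poissonProb b j * poissonProb b k)) =
      (∑' j, ∑' k, Rf j k).toReal := by
    rw [ENNReal.tsum_toReal_eq hR1ne]
    apply tsum_congr; intro j
    rw [ENNReal.tsum_toReal_eq (fun k => ENNReal.ofReal_ne_top)]
    exact tsum_congr fun k => (ENNReal.toReal_ofReal (hgRnn j k)).symm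
  -- the core inequality in ℝ≥0∞
  have hcore : ENNReal.ofReal xe * (∑' j, ∑' k, Rf j k) ≤ ∑' n, ∑' j, ∑' k, Lf n j k := by
    rw [hLf, hRf]
    rw [R_quad hx0 hbx, L_form hx0 hbx]
    rw [← ENNReal.tsum_mul_left]
    apply ENNReal.tsum_le_tsum; intro p
    rw [← ENNReal.tsum_mul_left]
    apply ENNReal.tsum_le_tsum; intro q
    rw [mul_left_comm]
    refine mul_le_mul_right (mul_le_mul_right ?_ _) _
    have hS : ∀ x : ℕ, ENNReal.ofReal (poissonProb xe x / (1 + (x : ℝ) + ((max p q : ℕ) : ℝ))) =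
        ENNReal.ofReal (poissonProb xe x) *
          ENNReal.ofReal (1 / (1 + (x : ℝ) + ((max p q : ℕ) : ℝ))) := by
      intro x
      rw [← ENNReal.ofReal_mul (pnx x), mul_one_div]
    simp only [hS]
    exact key_full hx0 p q
  rw [ge_iff_le, hLconv, hRconv]
  calc xe * (∑' j, ∑' k, Rf j k).toReal
      = (ENNReal.ofReal xe * (∑' j, ∑' k, Rf j k)).toReal := by
        rw [ENNReal.toReal_mul, ENNReal.toReal_ofReal hx0]
    _ ≤ (∑' n, ∑' j, ∑' k, Lf n j k).toReal := ENNReal.toReal_mono hLtop hcore
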